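/- Let C₁ and C₂ be model knot complexes and suppose there exist acyclic complexes A₁ and A₂ together with a bijection between the distinguished bases of C₁ ⊕ A₁ and of C₂ ⊕ A₂ which preserves gr, alg and Alex and whose linear extension commutes with the differentials. Then Υ_{C₁}(t) = Υ_{C₂}(t) for all t ∈ [0,2], and Υ²_{C₁,t}(s) = Υ²_{C₂,t}(s) for all t ∈ (0,2) and s ∈ [0,2]. In particular, Υ and Υ² are invariants of the stable equivalence class of a model knot complex. -/

import Mathlib

open scoped BigOperators

/-- A "pre-complex": a finite distinguished basis `B`, a grading `gr`,
bifiltration functions `alg` and `alex`, and a differential recorded by its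
matrix `d` over the field `F₂ = ZMod 2`:  `∂ x = ∑ y, d x y • y`. -/
structure PreComplex where
  B : Type
  fB : Fintype B
  dB : DecidableEq B
  gr : B → ℤ
  alg : B → ℤ
  alex : B → ℤ
  d : B → B → ZMod 2

attribute [instance] PreComplex.fB PreComplex.dB

namespace PreComplex

variable (C : PreComplex)

/-- Chains: F₂-linear combinations of basis elements. -/
abbrev Chain : Type := C.B → ZMod 2

/-- The boundary of a chain, extending `∂ x = ∑ y, d x y • y` linearly. -/
def bdry (c : C.Chain) : C.Chain := fun y => ∑ x, c x * C.d x y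

/-- A chain is homogeneous of grading `k`. -/
def isGraded (c : C.Chain) (k : ℤ) : Prop := ∀ x, c x ≠ 0 → C.gr x = k

def isCycle (c : C.Chain) : Prop := C.bdry c = 0

def isBoundary (c : C.Chain) : Prop := ∃ w : C.Chain, C.bdry w = c

/-- A cycle of grading 0 representing the nonzero class of `H₀(C)`. -/
def GenCycle (z : C.Chain) : Prop :=
  C.isCycle z ∧ C.isGraded z 0 ∧ ¬ C.isBoundary z

/-- The bifiltration level of a basis element. -/
def lev (x : C.B) : ℤ × ℤ := (C.alg x, C.alex x)

/-- A model knot complex: `∂ ∘ ∂ = 0`; `∂` drops the grading by one and does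
not increase either filtration; the homology is one dimensional, concentrated
in grading 0; and the minimum over cycles representing the generator of
`H₀(C)` of their maximal `alg` (resp. `alex`) filtration level is 0. -/
def IsModel : Prop :=
  (∀ x z, (∑ y, C.d x y * C.d y z) = 0) ∧
  (∀ x y, C.d x y ≠ 0 → C.gr y = C.gr x - 1 ∧ C.alg y ≤ C.alg x ∧ C.alex y ≤ C.alex x) ∧
  (∀ k : ℤ, k ≠ 0 → ∀ z : C.Chain, C.isCycle z → C.isGraded z k → C.isBoundary z) ∧
  (∃ z : C.Chain, C.GenCycle z) ∧
  (∀ z z' : C.Chain, C.GenCycle z → C.GenCycle z' → C.isBoundary (z + z')) ∧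
  (∃ z : C.Chain, C.GenCycle z ∧ ∀ x, z x ≠ 0 → C.alg x ≤ 0) ∧
  (∀ z : C.Chain, C.GenCycle z → ∃ x, z x ≠ 0 ∧ 0 ≤ C.alg x) ∧
  (∃ z : C.Chain, C.GenCycle z ∧ ∀ x, z x ≠ 0 → C.alex x ≤ 0) ∧
  (∀ z : C.Chain, C.GenCycle z → ∃ x, z x ≠ 0 ∧ 0 ≤ C.alex x)

/-- An acyclic complex: conditions (i) and (ii) hold but the homology vanishes. -/
def IsAcyclic : Prop :=
  (∀ x z, (∑ y, C.d x y * C.d y z) = 0) ∧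
  (∀ x y, C.d x y ≠ 0 → C.gr y = C.gr x - 1 ∧ C.alg y ≤ C.alg x ∧ C.alex y ≤ C.alex x) ∧
  (∀ z : C.Chain, C.isCycle z → C.isBoundary z)

end PreComplex

/-- `f_t(i,j) = (t/2)·j + (1 − t/2)·i`. -/
noncomputable def fval (t : ℝ) (p : ℤ × ℤ) : ℝ :=
  (t / 2) * (p.2 : ℝ) + (1 - t / 2) * (p.1 : ℝ)

namespace PreComplex

variable (C : PreComplex)

/-- A chain lies in the subcomplex `F_{t,s}`. -/
def inF (t s : ℝ) (c : C.Chain) : Prop :=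
  ∀ x, c x ≠ 0 → fval t (C.lev x) ≤ s

/-- `γ_C(t)`: the minimal `s` such that `H₀(F_{t,s}) → H₀(C)` is surjective,
i.e. such that `F_{t,s}` contains a cycle representing the generator. -/
noncomputable def gamma (t : ℝ) : ℝ :=
  sInf {s : ℝ | ∃ z : C.Chain, C.GenCycle z ∧ C.inF t s z}

/-- The Upsilon invariant `Υ_C(t) = −2 γ_C(t)`. -/
noncomputable def Upsilon (t : ℝ) : ℝ := -2 * C.gamma t

/-- `P`: the set of bifiltration levels of basis elements. -/
def PSet : Set (ℤ × ℤ) := Set.range C.lev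

/-- `P_u = { p ∈ P : f_u(p) = γ_C(u) }`. -/
def Pt (u : ℝ) : Set (ℤ × ℤ) := {p ∈ C.PSet | fval u p = C.gamma u}

/-- `p` is the negative pivot point of `C` at `t`. -/
def IsNegPivot (t : ℝ) (p : ℤ × ℤ) : Prop :=
  ∃ δ₀ > (0 : ℝ), ∀ δ : ℝ, 0 < δ → δ < δ₀ → C.Pt (t - δ) ∩ C.Pt t = {p}

/-- `p` is the positive pivot point of `C` at `t`. -/
def IsPosPivot (t : ℝ) (p : ℤ × ℤ) : Prop :=
  ∃ δ₀ > (0 : ℝ), ∀ δ : ℝ, 0 < δ → δ < δ₀ → C.Pt (t + δ) ∩ C.Pt t = {p}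

/-- Cycles in `F_{t−δ, γ_C(t−δ)}` representing the nonzero class of `H₀(C)`. -/
def ZminusAt (t δ : ℝ) : Set C.Chain :=
  {z | C.GenCycle z ∧ C.inF (t - δ) (C.gamma (t - δ)) z}

/-- Cycles in `F_{t+δ, γ_C(t+δ)}` representing the nonzero class of `H₀(C)`. -/
def ZplusAt (t δ : ℝ) : Set C.Chain :=
  {z | C.GenCycle z ∧ C.inF (t + δ) (C.gamma (t + δ)) z}

/-- `Z⁻`: the (eventual, for all sufficiently small `δ > 0`) set of cycles in
`F_{t−δ, γ_C(t−δ)}` representing the nonzero class of `H₀(C)`. -/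
def Zminus (t : ℝ) : Set C.Chain :=
  {z | ∃ δ₀ > (0 : ℝ), ∀ δ : ℝ, 0 < δ → δ < δ₀ → z ∈ C.ZminusAt t δ}

/-- `Z⁺`: the (eventual, for all sufficiently small `δ > 0`) set of cycles in
`F_{t+δ, γ_C(t+δ)}` representing the nonzero class of `H₀(C)`. -/
def Zplus (t : ℝ) : Set C.Chain :=
  {z | ∃ δ₀ > (0 : ℝ), ∀ δ : ℝ, 0 < δ → δ < δ₀ → z ∈ C.ZplusAt t δ}

/-- A basis element lies in the subcomplex `F_{t,γ_C(t)} + F_{s,r}`. -/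
def inRegion (t s r : ℝ) (x : C.B) : Prop :=
  fval t (C.lev x) ≤ C.gamma t ∨ fval s (C.lev x) ≤ r

/-- `z` and `z'` represent the same homology class in `H₀(F_{t,γ_C(t)} + F_{s,r})`
(over F₂ the difference `z − z'` is `z + z'`). -/
def sameClass (t s r : ℝ) (z z' : C.Chain) : Prop :=
  (∀ x, z x ≠ 0 → C.inRegion t s r x) ∧
  (∀ x, z' x ≠ 0 → C.inRegion t s r x) ∧
  ∃ w : C.Chain, (∀ x, w x ≠ 0 → C.inRegion t s r x) ∧ C.bdry w = z + z'

/-- The set of `r` for which some `z⁻ ∈ Z⁻` and `z⁺ ∈ Z⁺` represent the same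
class in `H₀(F_{t,γ_C(t)} + F_{s,r})`. -/
def gamma2Set (t s : ℝ) : Set ℝ :=
  {r | ∃ zm ∈ C.Zminus t, ∃ zp ∈ C.Zplus t, C.sameClass t s r zm zp}

/-- `γ²_{C,t}(s)`, as an extended real: the minimum of `gamma2Set`
(`−∞` if the condition holds for every `r`). -/
noncomputable def gamma2 (t s : ℝ) : EReal :=
  sInf ((fun r : ℝ => (r : EReal)) '' C.gamma2Set t s)

/-- `Υ²_{C,t}(s) = −2 (γ²_{C,t}(s) − γ_C(t))`. -/
noncomputable def Upsilon2 (t s : ℝ) : EReal :=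
  (-2 : EReal) * (C.gamma2 t s - (C.gamma t : EReal))

end PreComplex

/-- The jump of the derivative of `f` at `t`: the right-hand derivative minus
the left-hand derivative. -/
noncomputable def derivJump (f : ℝ → ℝ) (t : ℝ) : ℝ :=
  derivWithin f (Set.Ici t) t - derivWithin f (Set.Iic t) t

/-- Direct sum of two pre-complexes. -/
def PreComplex.dsum (C A : PreComplex) : PreComplex where
  B := C.B ⊕ A.B
  fB := inferInstance
  dB := inferInstance
  gr := Sum.elim C.gr A.gr
  alg := Sum.elim C.alg A.alg
  alex := Sum.elim C.alex A.alex
  d := fun x y =>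
    match x, y with
    | Sum.inl x, Sum.inl y => C.d x y
    | Sum.inr x, Sum.inr y => A.d x y
    | _, _ => 0

/-- Tensor product of two pre-complexes. -/
def PreComplex.tensor (C₁ C₂ : PreComplex) : PreComplex where
  B := C₁.B × C₂.B
  fB := inferInstance
  dB := inferInstance
  gr := fun x => C₁.gr x.1 + C₂.gr x.2
  alg := fun x => C₁.alg x.1 + C₂.alg x.2
  alex := fun x => C₁.alex x.1 + C₂.alex x.2
  d := fun x y =>
    (if x.2 = y.2 then C₁.d x.1 y.1 else 0) + (if x.1 = y.1 then C₂.d x.2 y.2 else 0)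

/-- An isomorphism of pre-complexes: a bijection of the distinguished bases
preserving `gr`, `alg`, `alex`, whose linear extension commutes with the
differentials. -/
def PreComplex.Iso (C₁ C₂ : PreComplex) : Prop :=
  ∃ e : C₁.B ≃ C₂.B,
    (∀ x, C₂.gr (e x) = C₁.gr x) ∧
    (∀ x, C₂.alg (e x) = C₁.alg x) ∧
    (∀ x, C₂.alex (e x) = C₁.alex x) ∧
    (∀ x y, C₂.d (e x) (e y) = C₁.d x y)

/-- Stable equivalence of pre-complexes: isomorphism after adding acyclic
summands. -/
def PreComplex.StablyEquiv (C₁ C₂ : PreComplex) : Prop :=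
  ∃ A₁ A₂ : PreComplex, A₁.IsAcyclic ∧ A₂.IsAcyclic ∧ (C₁.dsum A₁).Iso (C₂.dsum A₂)
namespace PreComplex

/-! ### Transport along an isomorphism -/

section IsoTransport

variable {C D : PreComplex} (e : C.B ≃ D.B)

theorem bdry_push (hd : ∀ x y, D.d (e x) (e y) = C.d x y) (c : C.Chain) :
    D.bdry (fun y => c (e.symm y)) = fun y => C.bdry c (e.symm y) := by
  funext y
  show (∑ x, c (e.symm x) * D.d x y) = ∑ x, c x * C.d x (e.symm y)
  rw [← Equiv.sum_comp e (fun x => c (e.symm x) * D.d x y)]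
  refine Finset.sum_congr rfl fun x _ => ?_
  rw [e.symm_apply_apply]
  congr 1
  rw [← hd x (e.symm y), e.apply_symm_apply]

theorem push_add (z z' : C.Chain) :
    (fun y => (z + z') (e.symm y)) =
      (fun y => z (e.symm y)) + fun y => z' (e.symm y) := rfl

theorem isBoundary_push (hd : ∀ x y, D.d (e x) (e y) = C.d x y) (z : C.Chain) :
    C.isBoundary z ↔ D.isBoundary (fun y => z (e.symm y)) := by
  constructor
  · rintro ⟨w, hw⟩
    exact ⟨fun y => w (e.symm y), by rw [bdry_push e hd, hw]⟩
  · rintro ⟨w, hw⟩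
    refine ⟨fun x => w (e x), ?_⟩
    have h2 := bdry_push e hd (fun x => w (e x))
    have hwe : (fun y => w (e (e.symm y))) = w := by
      funext y; rw [e.apply_symm_apply]
    rw [hwe, hw] at h2
    funext x
    have := congrFun h2 (e x)
    rw [e.symm_apply_apply] at this
    exact this.symm

theorem genCycle_push (hgr : ∀ x, D.gr (e x) = C.gr x)
    (hd : ∀ x y, D.d (e x) (e y) = C.d x y) {z : C.Chain} (hz : C.GenCycle z) :
    D.GenCycle (fun y => z (e.symm y)) := by
  obtain ⟨hc, hg, hb⟩ := hz
  refine ⟨?_, ?_, ?_⟩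
  · show D.bdry _ = 0
    rw [bdry_push e hd, hc]; rfl
  · intro x hx
    have := hg (e.symm x) hx
    rw [← this, ← hgr (e.symm x), e.apply_symm_apply]
  · intro h
    exact hb ((isBoundary_push e hd z).2 h)

theorem lev_push (halg : ∀ x, D.alg (e x) = C.alg x)
    (halex : ∀ x, D.alex (e x) = C.alex x) (x : D.B) :
    D.lev x = C.lev (e.symm x) := by
  have h1 := halg (e.symm x); have h2 := halex (e.symm x)
  rw [e.apply_symm_apply] at h1 h2
  simp [lev, h1, h2]

theorem inF_push (halg : ∀ x, D.alg (e x) = C.alg x)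
    (halex : ∀ x, D.alex (e x) = C.alex x) {t s : ℝ} {z : C.Chain}
    (h : C.inF t s z) : D.inF t s (fun y => z (e.symm y)) := by
  intro x hx
  rw [lev_push e halg halex]
  exact h (e.symm x) hx

end IsoTransport

theorem Iso.symm {C D : PreComplex} (h : C.Iso D) : D.Iso C := by
  obtain ⟨e, h1, h2, h3, h4⟩ := h
  refine ⟨e.symm, fun x => ?_, fun x => ?_, fun x => ?_, fun x y => ?_⟩
  · rw [← h1 (e.symm x), e.apply_symm_apply]
  · rw [← h2 (e.symm x), e.apply_symm_apply]
  · rw [← h3 (e.symm x), e.apply_symm_apply]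
  · rw [← h4 (e.symm x) (e.symm y), e.apply_symm_apply, e.apply_symm_apply]

theorem Iso.gammaSet_subset {C D : PreComplex} (h : C.Iso D) (t : ℝ) :
    {s : ℝ | ∃ z : C.Chain, C.GenCycle z ∧ C.inF t s z} ⊆
      {s : ℝ | ∃ z : D.Chain, D.GenCycle z ∧ D.inF t s z} := by
  obtain ⟨e, h1, h2, h3, h4⟩ := h
  rintro s ⟨z, hz, hf⟩
  exact ⟨fun y => z (e.symm y), genCycle_push e h1 h4 hz, inF_push e h2 h3 hf⟩

theorem Iso.gamma_eq {C D : PreComplex} (h : C.Iso D) (t : ℝ) :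
    C.gamma t = D.gamma t := by
  unfold gamma
  rw [Set.Subset.antisymm (h.gammaSet_subset t) (h.symm.gammaSet_subset t)]

theorem Iso.gamma2Set_subset {C D : PreComplex} (h : C.Iso D) (t s : ℝ) :
    C.gamma2Set t s ⊆ D.gamma2Set t s := by
  have hgam := h.gamma_eq
  obtain ⟨e, h1, h2, h3, h4⟩ := h
  rintro r ⟨zm, ⟨δm, hδm, hm⟩, zp, ⟨δp, hδp, hp⟩, hrm, hrp, w, hrw, hbw⟩
  have hreg : ∀ (z : C.Chain), (∀ x, z x ≠ 0 → C.inRegion t s r x) →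
      ∀ x, (fun y => z (e.symm y)) x ≠ 0 → D.inRegion t s r x := by
    intro z hz x hx
    have := hz (e.symm x) hx
    unfold inRegion at this ⊢
    rw [lev_push e h2 h3, ← hgam t]
    exact this
  refine ⟨fun y => zm (e.symm y), ⟨δm, hδm, fun δ hδ1 hδ2 => ?_⟩,
    fun y => zp (e.symm y), ⟨δp, hδp, fun δ hδ1 hδ2 => ?_⟩,
    hreg zm hrm, hreg zp hrp,
    fun y => w (e.symm y), hreg w hrw, ?_⟩
  · obtain ⟨ha, hb⟩ := hm δ hδ1 hδ2
    exact ⟨genCycle_push e h1 h4 ha, by rw [← hgam]; exact inF_push e h2 h3 hb⟩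
  · obtain ⟨ha, hb⟩ := hp δ hδ1 hδ2
    exact ⟨genCycle_push e h1 h4 ha, by rw [← hgam]; exact inF_push e h2 h3 hb⟩
  · rw [bdry_push e h4, hbw]
    rfl

theorem Iso.gamma2Set_eq {C D : PreComplex} (h : C.Iso D) (t s : ℝ) :
    C.gamma2Set t s = D.gamma2Set t s :=
  Set.Subset.antisymm (h.gamma2Set_subset t s) (h.symm.gamma2Set_subset t s)

end PreComplex
namespace PreComplex

/-! ### Adding an acyclic summand -/

section Dsum

variable (C A : PreComplex)

theorem dsum_bdry_inl (c : (C.dsum A).Chain) (y : C.B) :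
    (C.dsum A).bdry c (Sum.inl y) = C.bdry (fun x => c (Sum.inl x)) y := by
  show (∑ x : C.B ⊕ A.B, c x * (C.dsum A).d x (Sum.inl y)) = _
  rw [Fintype.sum_sum_type]
  have h1 : ∀ x : A.B, c (Sum.inr x) * (C.dsum A).d (Sum.inr x) (Sum.inl y) = 0 := by
    intro x; show c (Sum.inr x) * 0 = 0; rw [mul_zero]
  rw [Finset.sum_congr rfl (fun x _ => h1 x), Finset.sum_const_zero, add_zero]
  rfl

theorem dsum_bdry_inr (c : (C.dsum A).Chain) (y : A.B) :
    (C.dsum A).bdry c (Sum.inr y) = A.bdry (fun x => c (Sum.inr x)) y := by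
  show (∑ x : C.B ⊕ A.B, c x * (C.dsum A).d x (Sum.inr y)) = _
  rw [Fintype.sum_sum_type]
  have h1 : ∀ x : C.B, c (Sum.inl x) * (C.dsum A).d (Sum.inl x) (Sum.inr y) = 0 := by
    intro x; show c (Sum.inl x) * 0 = 0; rw [mul_zero]
  rw [Finset.sum_congr rfl (fun x _ => h1 x), Finset.sum_const_zero, zero_add]
  rfl

variable {C A}

theorem genCycle_inj {z : C.Chain} (hz : C.GenCycle z) :
    (C.dsum A).GenCycle (Sum.elim z 0) := by
  obtain ⟨hc, hg, hb⟩ := hz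
  refine ⟨?_, ?_, ?_⟩
  · funext y
    cases y with
    | inl y =>
        refine (dsum_bdry_inl C A _ y).trans ?_
        show C.bdry z y = 0
        rw [hc]; rfl
    | inr y =>
        refine (dsum_bdry_inr C A _ y).trans ?_
        show A.bdry (0 : A.Chain) y = 0
        show (∑ x, (0 : ZMod 2) * A.d x y) = 0
        simp
  · intro x hx
    cases x with
    | inl x => exact hg x hx
    | inr x => exact absurd rfl hx
  · rintro ⟨w, hw⟩
    refine hb ⟨fun x => w (Sum.inl x), ?_⟩
    funext y
    have := congrFun hw (Sum.inl y)
    rw [dsum_bdry_inl] at this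
    exact this

theorem genCycle_proj (hA : A.IsAcyclic) {z : (C.dsum A).Chain}
    (hz : (C.dsum A).GenCycle z) : C.GenCycle (fun x => z (Sum.inl x)) := by
  obtain ⟨hc, hg, hb⟩ := hz
  refine ⟨?_, ?_, ?_⟩
  · funext y
    rw [← dsum_bdry_inl, hc]; rfl
  · intro x hx
    exact hg (Sum.inl x) hx
  · rintro ⟨w, hw⟩
    have hcyc : A.isCycle (fun x => z (Sum.inr x)) := by
      funext y
      rw [← dsum_bdry_inr, hc]; rfl
    obtain ⟨v, hv⟩ := hA.2.2 _ hcyc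
    refine hb ⟨Sum.elim w v, ?_⟩
    funext y
    cases y with
    | inl y =>
        refine (dsum_bdry_inl C A _ y).trans ?_
        exact congrFun hw y
    | inr y =>
        refine (dsum_bdry_inr C A _ y).trans ?_
        exact congrFun hv y

theorem dsum_gammaSet_eq (hA : A.IsAcyclic) (t : ℝ) :
    {s : ℝ | ∃ z : (C.dsum A).Chain, (C.dsum A).GenCycle z ∧ (C.dsum A).inF t s z} =
      {s : ℝ | ∃ z : C.Chain, C.GenCycle z ∧ C.inF t s z} := by
  ext s
  constructor
  · rintro ⟨z, hz, hf⟩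
    exact ⟨fun x => z (Sum.inl x), genCycle_proj hA hz, fun x hx => hf (Sum.inl x) hx⟩
  · rintro ⟨z, hz, hf⟩
    refine ⟨Sum.elim z 0, genCycle_inj hz, ?_⟩
    intro x hx
    cases x with
    | inl x => exact hf x hx
    | inr x => exact absurd rfl hx

theorem dsum_gamma_eq (hA : A.IsAcyclic) (t : ℝ) :
    (C.dsum A).gamma t = C.gamma t := by
  unfold gamma
  rw [dsum_gammaSet_eq hA t]

theorem dsum_gamma2Set_eq (hA : A.IsAcyclic) (t s : ℝ) :
    (C.dsum A).gamma2Set t s = C.gamma2Set t s := by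
  have hgam := fun u => dsum_gamma_eq (C := C) hA u
  ext r
  constructor
  · rintro ⟨zm, ⟨δm, hδm, hm⟩, zp, ⟨δp, hδp, hp⟩, hrm, hrp, w, hrw, hbw⟩
    have hreg : ∀ (z : (C.dsum A).Chain),
        (∀ x, z x ≠ 0 → (C.dsum A).inRegion t s r x) →
        ∀ x : C.B, z (Sum.inl x) ≠ 0 → C.inRegion t s r x := by
      intro z hz x hx
      have := hz (Sum.inl x) hx
      unfold inRegion at this ⊢
      rw [← hgam t]
      exact this
    refine ⟨fun x => zm (Sum.inl x), ⟨δm, hδm, fun δ h1 h2 => ?_⟩,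
      fun x => zp (Sum.inl x), ⟨δp, hδp, fun δ h1 h2 => ?_⟩,
      hreg zm hrm, hreg zp hrp, fun x => w (Sum.inl x), hreg w hrw, ?_⟩
    · obtain ⟨ha, hb⟩ := hm δ h1 h2
      exact ⟨genCycle_proj hA ha, fun x hx => by
        have := hb (Sum.inl x) hx
        rwa [hgam] at this⟩
    · obtain ⟨ha, hb⟩ := hp δ h1 h2
      exact ⟨genCycle_proj hA ha, fun x hx => by
        have := hb (Sum.inl x) hx
        rwa [hgam] at this⟩
    · funext y
      rw [← dsum_bdry_inl, hbw]
      rfl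
  · rintro ⟨zm, ⟨δm, hδm, hm⟩, zp, ⟨δp, hδp, hp⟩, hrm, hrp, w, hrw, hbw⟩
    have hreg : ∀ (z : C.Chain), (∀ x, z x ≠ 0 → C.inRegion t s r x) →
        ∀ x, Sum.elim z (0 : A.Chain) x ≠ 0 → (C.dsum A).inRegion t s r x := by
      intro z hz x hx
      cases x with
      | inl x =>
          have := hz x hx
          unfold inRegion at this ⊢
          rw [hgam t]
          exact this
      | inr x => exact absurd rfl hx
    refine ⟨Sum.elim zm 0, ⟨δm, hδm, fun δ h1 h2 => ?_⟩,
      Sum.elim zp 0, ⟨δp, hδp, fun δ h1 h2 => ?_⟩,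
      hreg zm hrm, hreg zp hrp, Sum.elim w 0, hreg w hrw, ?_⟩
    · obtain ⟨ha, hb⟩ := hm δ h1 h2
      refine ⟨genCycle_inj ha, fun x hx => ?_⟩
      cases x with
      | inl x => rw [hgam]; exact hb x hx
      | inr x => exact absurd rfl hx
    · obtain ⟨ha, hb⟩ := hp δ h1 h2
      refine ⟨genCycle_inj ha, fun x hx => ?_⟩
      cases x with
      | inl x => rw [hgam]; exact hb x hx
      | inr x => exact absurd rfl hx
    · funext y
      cases y with
      | inl y =>
          refine (dsum_bdry_inl C A _ y).trans ?_
          show C.bdry w y = zm y + zp y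
          rw [hbw]; rfl
      | inr y =>
          refine (dsum_bdry_inr C A _ y).trans ?_
          show A.bdry (0 : A.Chain) y = (0 : ZMod 2) + 0
          show (∑ x, (0 : ZMod 2) * A.d x y) = 0 + 0
          simp

end Dsum

end PreComplex

/-- if `C₁ ⊕ A₁ ≅ C₂ ⊕ A₂` with `A₁, A₂` acyclic, then `C₁` and
`C₂` have the same `Υ` and `Υ²`; i.e. `Υ` and `Υ²` are invariants of the
stable equivalence class of a model knot complex. -/
theorem stable_equivalence_invariance (C₁ C₂ A₁ A₂ : PreComplex)
    (hC₁ : C₁.IsModel) (hC₂ : C₂.IsModel)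
    (hA₁ : A₁.IsAcyclic) (hA₂ : A₂.IsAcyclic)
    (hiso : (C₁.dsum A₁).Iso (C₂.dsum A₂)) :
    (∀ t ∈ Set.Icc (0 : ℝ) 2, C₁.Upsilon t = C₂.Upsilon t) ∧
    (∀ t ∈ Set.Ioo (0 : ℝ) 2, ∀ s ∈ Set.Icc (0 : ℝ) 2,
        C₁.Upsilon2 t s = C₂.Upsilon2 t s) := by
  have hgam : ∀ t, C₁.gamma t = C₂.gamma t := by
    intro t
    rw [← PreComplex.dsum_gamma_eq hA₁ t, ← PreComplex.dsum_gamma_eq (C := C₂) hA₂ t,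
      hiso.gamma_eq t]
  have hg2 : ∀ t s, C₁.gamma2Set t s = C₂.gamma2Set t s := by
    intro t s
    rw [← PreComplex.dsum_gamma2Set_eq hA₁ t s, ← PreComplex.dsum_gamma2Set_eq (C := C₂) hA₂ t s,
      hiso.gamma2Set_eq t s]
  constructor
  · intro t _
    unfold PreComplex.Upsilon
    rw [hgam t]
  · intro t _ s _
    unfold PreComplex.Upsilon2 PreComplex.gamma2
    rw [hgam t, hg2 t s]
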